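/- There exists a constant c > 0, depending only on L and h, such that for all u of class C² on M̄, all φ of class C¹ on M̄, and all continuous ψ on M̄, one has | ∫_M w(u) (∂_z φ) ψ dM | ≤ c ‖u‖_{H¹}^{1/2} |u|_{H²}^{1/2} |∂_z φ| |ψ|, where w(u)(x,z) = ∫_z^0 ∂_x u(x,s) ds. -/

import Mathlib

open MeasureTheory Set intervalIntegral

/-- Partial derivative in the first (horizontal, `x`) variable. -/
noncomputable def pdx (f : ℝ × ℝ → ℝ) (p : ℝ × ℝ) : ℝ := fderiv ℝ f p (1, 0)

/-- Partial derivative in the second (vertical, `z`) variable. -/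
noncomputable def pdz (f : ℝ × ℝ → ℝ) (p : ℝ × ℝ) : ℝ := fderiv ℝ f p (0, 1)

/-- The diagnostic vertical velocity `w(u)(x,z) = ∫_z^0 ∂ₓ u(x,s) ds`. -/
noncomputable def wOp (u : ℝ × ℝ → ℝ) (p : ℝ × ℝ) : ℝ := ∫ s in p.2..0, pdx u (p.1, s)

/-- The open domain `M = (0,L) × (-h,0)`. -/
def dom (L h : ℝ) : Set (ℝ × ℝ) := Ioo 0 L ×ˢ Ioo (-h) 0

/-- The closed domain `M̄ = [0,L] × [-h,0]`. -/
def cdom (L h : ℝ) : Set (ℝ × ℝ) := Icc 0 L ×ˢ Icc (-h) 0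

/-- The `L²(M)` norm. -/
noncomputable def l2 (L h : ℝ) (f : ℝ × ℝ → ℝ) : ℝ :=
  Real.sqrt (∫ p in dom L h, f p ^ 2)

/-- The `H¹(M)` norm. -/
noncomputable def h1n (L h : ℝ) (f : ℝ × ℝ → ℝ) : ℝ :=
  Real.sqrt (l2 L h f ^ 2 + l2 L h (pdx f) ^ 2 + l2 L h (pdz f) ^ 2)

/-- The `H²(M)` norm. -/
noncomputable def h2n (L h : ℝ) (f : ℝ × ℝ → ℝ) : ℝ :=
  Real.sqrt (h1n L h f ^ 2 + l2 L h (pdx (pdx f)) ^ 2 + l2 L h (pdx (pdz f)) ^ 2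
    + l2 L h (pdz (pdz f)) ^ 2)

/-- Cauchy–Schwarz for real integrals. -/
lemma cs_aux {α : Type*} [MeasurableSpace α] (μ : Measure α) (f g : α → ℝ)
    (hfm : AEStronglyMeasurable f μ) (hgm : AEStronglyMeasurable g μ)
    (hf2 : Integrable (fun a => f a ^ 2) μ) (hg2 : Integrable (fun a => g a ^ 2) μ) :
    ∫ a, |f a * g a| ∂μ ≤ Real.sqrt (∫ a, f a ^ 2 ∂μ) * Real.sqrt (∫ a, g a ^ 2 ∂μ) := by
  set A := ∫ a, f a ^ 2 ∂μ with hA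
  set B := ∫ a, g a ^ 2 ∂μ with hB
  have hA0 : 0 ≤ A := integral_nonneg fun a => sq_nonneg _
  have hB0 : 0 ≤ B := integral_nonneg fun a => sq_nonneg _
  have hfg : Integrable (fun a => |f a * g a|) μ := by
    refine ((hf2.add hg2).div_const 2).mono' (hfm.mul hgm).norm ?_
    filter_upwards with a
    have h2 := two_mul_le_add_sq (|f a|) (|g a|)
    rw [sq_abs, sq_abs] at h2
    rw [Real.norm_eq_abs, abs_abs, abs_mul]
    simp only [Pi.add_apply]
    nlinarith [abs_nonneg (f a), abs_nonneg (g a)]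
  rcases eq_or_lt_of_le hB0 with hB0' | hBpos
  · have hg0 : (fun a => g a ^ 2) =ᵐ[μ] 0 :=
      (integral_eq_zero_iff_of_nonneg (fun a => sq_nonneg _) hg2).1 hB0'.symm
    have hz : (fun a => |f a * g a|) =ᵐ[μ] (fun _ => (0:ℝ)) := by
      filter_upwards [hg0] with a ha
      have hga : g a = 0 := by
        simp only [Pi.zero_apply] at ha
        exact pow_eq_zero_iff (by norm_num) |>.1 ha
      simp [hga]
    rw [integral_congr_ae hz]
    simpa using mul_nonneg (Real.sqrt_nonneg A) (Real.sqrt_nonneg B)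
  rcases eq_or_lt_of_le hA0 with hA0' | hApos
  · have hf0 : (fun a => f a ^ 2) =ᵐ[μ] 0 :=
      (integral_eq_zero_iff_of_nonneg (fun a => sq_nonneg _) hf2).1 hA0'.symm
    have hz : (fun a => |f a * g a|) =ᵐ[μ] (fun _ => (0:ℝ)) := by
      filter_upwards [hf0] with a ha
      have hfa : f a = 0 := by
        simp only [Pi.zero_apply] at ha
        exact pow_eq_zero_iff (by norm_num) |>.1 ha
      simp [hfa]
    rw [integral_congr_ae hz]
    simpa using mul_nonneg (Real.sqrt_nonneg A) (Real.sqrt_nonneg B)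
  · set t := Real.sqrt (B / A) with ht
    have ht0 : 0 < t := Real.sqrt_pos.2 (div_pos hBpos hApos)
    have ht2 : t ^ 2 = B / A := Real.sq_sqrt (div_nonneg hB0 hA0)
    have key : ∀ a, 2 * t * |f a * g a| ≤ t ^ 2 * f a ^ 2 + g a ^ 2 := by
      intro a
      have h1 := sq_nonneg (t * |f a| - |g a|)
      have h2 : |f a * g a| = |f a| * |g a| := abs_mul _ _
      nlinarith [sq_abs (f a), sq_abs (g a), abs_nonneg (f a), abs_nonneg (g a)]
    have hint : 2 * t * ∫ a, |f a * g a| ∂μ ≤ t ^ 2 * A + B := by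
      rw [← MeasureTheory.integral_const_mul, hA, ← MeasureTheory.integral_const_mul,
        ← MeasureTheory.integral_add ((hf2.const_mul _)) hg2]
      exact integral_mono (hfg.const_mul _) ((hf2.const_mul _).add hg2) key
    have htA : t ^ 2 * A = B := by
      rw [ht2]; field_simp
    have hsA : Real.sqrt A ≠ 0 := ne_of_gt (Real.sqrt_pos.2 hApos)
    have hprod : 2 * t * (Real.sqrt A * Real.sqrt B) = t ^ 2 * A + B := by
      rw [htA, ht, Real.sqrt_div hB0]
      field_simp
      nlinarith [Real.mul_self_sqrt hB0, Real.sqrt_nonneg A, Real.sqrt_nonneg B]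
    rw [← hprod] at hint
    exact le_of_mul_le_mul_left hint (by positivity)

lemma pdx_continuous {f : ℝ × ℝ → ℝ} (hf : ContDiff ℝ 1 f) : Continuous (pdx f) :=
  (hf.continuous_fderiv one_ne_zero).clm_apply continuous_const

lemma pdz_continuous {f : ℝ × ℝ → ℝ} (hf : ContDiff ℝ 1 f) : Continuous (pdz f) :=
  (hf.continuous_fderiv one_ne_zero).clm_apply continuous_const

lemma contDiff_pdx {u : ℝ × ℝ → ℝ} (hu : ContDiff ℝ 2 u) : ContDiff ℝ 1 (pdx u) :=
  (hu.fderiv_right (by norm_num)).clm_apply contDiff_const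

theorem stmt16 (L h : ℝ) (hL : 0 < L) (hh : 0 < h) :
    ∃ c > 0, ∀ u φ ψ : ℝ × ℝ → ℝ,
      ContDiff ℝ 2 u → ContDiff ℝ 1 φ → Continuous ψ →
      |∫ p in dom L h, wOp u p * pdz φ p * ψ p| ≤
        c * h1n L h u ^ ((1:ℝ)/2) * h2n L h u ^ ((1:ℝ)/2) * l2 L h (pdz φ) * l2 L h ψ := by
  have hh' : (-h : ℝ) ≤ 0 := by linarith
  refine ⟨Real.sqrt h * Real.sqrt (1 / L + 2), by positivity, ?_⟩
  intro u φ ψ hu hφ hψ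
  set g : ℝ × ℝ → ℝ := pdx u with hgdef
  have hg1 : ContDiff ℝ 1 g := contDiff_pdx hu
  have hgc : Continuous g := hg1.continuous
  set g2 : ℝ × ℝ → ℝ := pdx g with hg2def
  have hg2c : Continuous g2 := pdx_continuous hg1
  have hφz : Continuous (pdz φ) := pdz_continuous hφ
  have hslice : ∀ x : ℝ, Continuous fun z : ℝ => g (x, z) :=
    fun x => hgc.comp (continuous_const.prodMk continuous_id)
  have hslice' : ∀ z : ℝ, Continuous fun t : ℝ => g (t, z) :=
    fun z => hgc.comp (continuous_id.prodMk continuous_const)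
  have hslice2 : ∀ z : ℝ, Continuous fun t : ℝ => g2 (t, z) :=
    fun z => hg2c.comp (continuous_id.prodMk continuous_const)
  have hcg : ∀ z : ℝ, Continuous fun t : ℝ => 2 * g (t, z) * g2 (t, z) :=
    fun z => (continuous_const.mul (hslice' z)).mul (hslice2 z)
  -- integrability of continuous functions on `dom`
  have hsub : dom L h ⊆ cdom L h := prod_mono Ioo_subset_Icc_self Ioo_subset_Icc_self
  have hcomp : IsCompact (cdom L h) := isCompact_Icc.prod isCompact_Icc
  have intOn : ∀ F : ℝ × ℝ → ℝ, Continuous F → IntegrableOn F (dom L h) := fun F hF =>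
    (hF.continuousOn.integrableOn_compact hcomp).mono_set hsub
  -- continuity of `wOp u`
  have hwc : Continuous (wOp u) := by
    have h1 : Continuous fun p : ℝ × ℝ => ∫ s in (0:ℝ)..p.2, g (p.1, s) := by
      refine intervalIntegral.continuous_parametric_intervalIntegral_of_continuous
        (f := fun (p : ℝ × ℝ) (t : ℝ) => g (p.1, t)) ?_ continuous_snd
      exact hgc.comp ((continuous_fst.comp continuous_fst).prodMk continuous_snd)
    have : wOp u = fun p : ℝ × ℝ => -∫ s in (0:ℝ)..p.2, g (p.1, s) := by
      funext p
      rw [wOp, intervalIntegral.integral_symm]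
    rw [this]
    exact h1.neg
  -- Fubini helpers
  have fub : ∀ F : ℝ × ℝ → ℝ, Continuous F →
      ∫ p in dom L h, F p = ∫ x in Ioo 0 L, ∫ z in Ioo (-h) 0, F (x, z) := by
    intro F hF
    have hi : IntegrableOn F (Ioo 0 L ×ˢ Ioo (-h) 0)
        ((volume : Measure ℝ).prod (volume : Measure ℝ)) := by
      rw [← Measure.volume_eq_prod]; exact intOn F hF
    rw [dom, Measure.volume_eq_prod]
    exact setIntegral_prod F hi
  have fub2 : ∀ F : ℝ × ℝ → ℝ, Continuous F →
      ∫ p in dom L h, F p = ∫ z in Ioo (-h) 0, ∫ x in Ioo 0 L, F (x, z) := by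
    intro F hF
    rw [fub F hF]
    refine MeasureTheory.integral_integral_swap (f := fun x z => F (x, z)) ?_
    rw [Measure.prod_restrict, ← Measure.volume_eq_prod]
    exact intOn F hF
  -- interval integral vs Ioo set integral
  have ioo_eq : ∀ (a b : ℝ), a ≤ b → ∀ f : ℝ → ℝ,
      (∫ t in Ioo a b, f t) = ∫ t in a..b, f t := by
    intro a b hab f
    rw [intervalIntegral.integral_of_le hab, integral_Ioc_eq_integral_Ioo]
  set A := ∫ p in dom L h, g p ^ 2 with hAdef
  set B := ∫ p in dom L h, g2 p ^ 2 with hBdef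
  have hA0 : 0 ≤ A := setIntegral_nonneg (measurableSet_Ioo.prod measurableSet_Ioo)
    (fun p _ => sq_nonneg _)
  have hB0 : 0 ≤ B := setIntegral_nonneg (measurableSet_Ioo.prod measurableSet_Ioo)
    (fun p _ => sq_nonneg _)
  -- the slice function G
  set G : ℝ → ℝ := fun x => ∫ z in (-h)..0, g (x, z) ^ 2 with hGdef
  have hGc : Continuous G := by
    refine intervalIntegral.continuous_parametric_intervalIntegral_of_continuous'
      (f := fun (x : ℝ) (z : ℝ) => g (x, z) ^ 2) ?_ (-h) 0
    exact (hgc.comp (continuous_fst.prodMk continuous_snd)).pow 2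
  have hGnn : ∀ x, 0 ≤ G x := fun x =>
    intervalIntegral.integral_nonneg hh' (fun z _ => sq_nonneg _)
  -- A as an iterated integral of G
  have hAiter : A = ∫ x in (0:ℝ)..L, G x := by
    rw [hAdef, fub (fun p => g p ^ 2) (hgc.pow 2), ← ioo_eq 0 L hL.le]
    exact setIntegral_congr_fun measurableSet_Ioo fun x _ => ioo_eq (-h) 0 hh' _
  -- minimum point of G
  obtain ⟨x₀, hx₀mem, hx₀min⟩ :=
    isCompact_Icc.exists_isMinOn (nonempty_Icc.2 hL.le) hGc.continuousOn
  have hGx₀ : G x₀ ≤ A / L := by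
    rw [le_div_iff₀ hL, mul_comm]
    have h1 : (∫ _ in (0:ℝ)..L, G x₀) ≤ ∫ x in (0:ℝ)..L, G x :=
      intervalIntegral.integral_mono_on hL.le intervalIntegrable_const
        (hGc.intervalIntegrable _ _) (fun x hx => hx₀min hx)
    rw [intervalIntegral.integral_const, smul_eq_mul, sub_zero] at h1
    rw [hAiter]
    linarith
  -- FTC for slices
  have ftc : ∀ z x : ℝ, (∫ t in x₀..x, 2 * g (t, z) * g2 (t, z))
      = g (x, z) ^ 2 - g (x₀, z) ^ 2 := by
    intro z x
    have hderiv : ∀ t ∈ uIcc x₀ x,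
        HasDerivAt (fun s => g (s, z) ^ 2) (2 * g (t, z) * g2 (t, z)) t := by
      intro t _
      have h1 : HasFDerivAt g (fderiv ℝ g (t, z)) (t, z) :=
        (hg1.differentiable one_ne_zero (t, z)).hasFDerivAt
      have h2 : HasDerivAt (fun s : ℝ => (s, z)) ((1:ℝ), (0:ℝ)) t :=
        (hasDerivAt_id t).prodMk (hasDerivAt_const t z)
      have h3 : HasDerivAt (fun s => g (s, z)) (g2 (t, z)) t := by
        have h5 := h1.comp_hasDerivAt t h2; exact h5
      have h4 := h3.pow 2
      norm_num at h4
      exact h4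
    refine intervalIntegral.integral_eq_sub_of_hasDerivAt hderiv ?_
    exact (hcg z).intervalIntegrable _ _
  -- the dominating integral
  set K : ℝ → ℝ := fun z => ∫ t in (0:ℝ)..L, |2 * g (t, z) * g2 (t, z)| with hKdef
  have hKc : Continuous K := by
    refine intervalIntegral.continuous_parametric_intervalIntegral_of_continuous'
      (f := fun (z : ℝ) (t : ℝ) => |2 * g (t, z) * g2 (t, z)|) ?_ 0 L
    refine Continuous.abs ?_
    exact (continuous_const.mul (hgc.comp (continuous_snd.prodMk continuous_fst))).mul
      (hg2c.comp (continuous_snd.prodMk continuous_fst))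
  -- slice increments are controlled
  have hGbound : ∀ x ∈ Icc (0:ℝ) L, G x ≤ G x₀ + ∫ z in (-h)..0, K z := by
    intro x hx
    have hdiff : G x - G x₀ = ∫ z in (-h)..0, (g (x, z) ^ 2 - g (x₀, z) ^ 2) := by
      rw [hGdef]
      exact (intervalIntegral.integral_sub (((hslice x).pow 2).intervalIntegrable _ _)
        (((hslice x₀).pow 2).intervalIntegrable _ _)).symm
    have hptw : ∀ z : ℝ, g (x, z) ^ 2 - g (x₀, z) ^ 2 ≤ K z := by
      intro z
      rw [← ftc z x]
      calc (∫ t in x₀..x, 2 * g (t, z) * g2 (t, z))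
          ≤ |∫ t in x₀..x, 2 * g (t, z) * g2 (t, z)| := le_abs_self _
        _ ≤ abs (∫ t in x₀..x, |2 * g (t, z) * g2 (t, z)|) := by
            simpa only [Real.norm_eq_abs] using
              intervalIntegral.norm_integral_le_abs_integral_norm
                (f := fun t => 2 * g (t, z) * g2 (t, z)) (a := x₀) (b := x) (μ := volume)
        _ ≤ abs (∫ t in (0:ℝ)..L, |2 * g (t, z) * g2 (t, z)|) := by
            refine intervalIntegral.abs_integral_mono_interval ?_ ?_ ?_
            · rw [uIoc_of_le hL.le]
              exact Ioc_subset_Ioc (le_min hx₀mem.1 hx.1) (max_le hx₀mem.2 hx.2)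
            · filter_upwards with t using abs_nonneg _
            · exact ((hcg z).abs).intervalIntegrable _ _
        _ = K z := abs_of_nonneg (intervalIntegral.integral_nonneg hL.le fun t _ => abs_nonneg _)
    have hmono : (∫ z in (-h)..0, (g (x, z) ^ 2 - g (x₀, z) ^ 2)) ≤ ∫ z in (-h)..0, K z := by
      refine intervalIntegral.integral_mono_on hh' ?_ (hKc.intervalIntegrable _ _)
        (fun z _ => hptw z)
      exact (((hslice x).pow 2).sub ((hslice x₀).pow 2)).intervalIntegrable _ _
    linarith [hdiff, hmono]
  -- identify the dominating integral with a 2D integral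
  have hE : (∫ z in (-h)..0, K z) = ∫ p in dom L h, |2 * g p * g2 p| := by
    have hc : Continuous fun p : ℝ × ℝ => |2 * g p * g2 p| :=
      ((continuous_const.mul hgc).mul hg2c).abs
    rw [fub2 _ hc, ← ioo_eq (-h) 0 hh']
    refine setIntegral_congr_fun measurableSet_Ioo fun z _ => ?_
    exact (ioo_eq 0 L hL.le _).symm
  have hE2 : (∫ p in dom L h, |2 * g p * g2 p|) ≤ 2 * (Real.sqrt A * Real.sqrt B) := by
    have h1 : (∫ p in dom L h, |2 * g p * g2 p|) = 2 * ∫ p in dom L h, |g p * g2 p| := by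
      rw [← MeasureTheory.integral_const_mul]
      refine setIntegral_congr_fun (measurableSet_Ioo.prod measurableSet_Ioo) fun p _ => ?_
      rw [mul_assoc, abs_mul, abs_two]
    rw [h1]
    have h2 := cs_aux ((volume : Measure (ℝ × ℝ)).restrict (dom L h)) g g2
      hgc.aestronglyMeasurable hg2c.aestronglyMeasurable
      (intOn _ (hgc.pow 2)) (intOn _ (hg2c.pow 2))
    exact mul_le_mul_of_nonneg_left h2 (by norm_num)
  set S : ℝ := A / L + 2 * (Real.sqrt A * Real.sqrt B) with hSdef
  have hS0 : 0 ≤ S := by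
    have := div_nonneg hA0 hL.le
    positivity
  have hGS : ∀ x ∈ Icc (0:ℝ) L, G x ≤ S := by
    intro x hx
    have h1 := hGbound x hx
    rw [hE] at h1
    have h2 := hE2
    have h3 := hGx₀
    rw [hSdef]
    linarith
  -- pointwise bound on wOp
  have hwW : ∀ p ∈ dom L h, |wOp u p| ≤ Real.sqrt h * Real.sqrt S := by
    rintro ⟨x, z⟩ hp
    obtain ⟨hx, hz⟩ := hp
    have hx' : x ∈ Icc (0:ℝ) L := Ioo_subset_Icc_self hx
    have step1 : |wOp u (x, z)| ≤ ∫ s in (-h)..0, |g (x, s)| := by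
      calc |wOp u (x, z)| = |∫ s in z..0, g (x, s)| := rfl
        _ ≤ abs (∫ s in z..0, |g (x, s)|) := by
            simpa only [Real.norm_eq_abs] using
              intervalIntegral.norm_integral_le_abs_integral_norm
                (f := fun s => g (x, s)) (a := z) (b := 0) (μ := volume)
        _ ≤ abs (∫ s in (-h)..0, |g (x, s)|) := by
            refine intervalIntegral.abs_integral_mono_interval ?_ ?_ ?_
            · rw [uIoc_of_le hh', uIoc_of_le hz.2.le]
              exact Ioc_subset_Ioc hz.1.le le_rfl
            · filter_upwards with t using abs_nonneg _
            · exact ((hslice x).abs).intervalIntegrable _ _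
        _ = ∫ s in (-h)..0, |g (x, s)| :=
            abs_of_nonneg (intervalIntegral.integral_nonneg hh' fun s _ => abs_nonneg _)
    have step2 : (∫ s in (-h)..0, |g (x, s)|) ≤ Real.sqrt (G x) * Real.sqrt h := by
      have hμ : (∫ s in Ioc (-h) 0, (1:ℝ) ^ 2 ∂volume) = h := by
        simp [Real.volume_Ioc, ENNReal.toReal_ofReal hh.le, hh.le]
      have hone : Integrable (fun _ : ℝ => ((1:ℝ)) ^ 2)
          ((volume : Measure ℝ).restrict (Ioc (-h) 0)) := by
        simp only [one_pow]
        exact (integrableOn_const (C := (1:ℝ))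
          (s := Ioc (-h) 0) (μ := volume) measure_Ioc_lt_top.ne)
      have h1 := cs_aux ((volume : Measure ℝ).restrict (Ioc (-h) 0))
        (fun s => g (x, s)) (fun _ => (1:ℝ))
        (Continuous.aestronglyMeasurable (hslice x)) aestronglyMeasurable_const
        (((hslice x).pow 2).integrableOn_Ioc) hone
      simp only [mul_one] at h1
      have h2 : (∫ s in (-h)..0, |g (x, s)|) = ∫ s in Ioc (-h) 0, |g (x, s)| ∂volume := by
        rw [intervalIntegral.integral_of_le hh']
      have h3 : G x = ∫ s in Ioc (-h) 0, g (x, s) ^ 2 ∂volume :=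
        intervalIntegral.integral_of_le hh'
      rw [h2, h3]
      calc (∫ s in Ioc (-h) 0, |g (x, s)| ∂volume)
          ≤ Real.sqrt (∫ s in Ioc (-h) 0, g (x, s) ^ 2 ∂volume) *
            Real.sqrt (∫ s in Ioc (-h) 0, (1:ℝ) ^ 2 ∂volume) := h1
        _ = Real.sqrt (∫ s in Ioc (-h) 0, g (x, s) ^ 2 ∂volume) * Real.sqrt h := by rw [hμ]
    have step3 : Real.sqrt (G x) ≤ Real.sqrt S := Real.sqrt_le_sqrt (hGS x hx')
    calc |wOp u (x, z)| ≤ ∫ s in (-h)..0, |g (x, s)| := step1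
      _ ≤ Real.sqrt (G x) * Real.sqrt h := step2
      _ ≤ Real.sqrt S * Real.sqrt h :=
          mul_le_mul_of_nonneg_right step3 (Real.sqrt_nonneg _)
      _ = Real.sqrt h * Real.sqrt S := mul_comm _ _
  -- final chain
  set W : ℝ := Real.sqrt h * Real.sqrt S with hWdef
  have hW0 : 0 ≤ W := by positivity
  have main1 : |∫ p in dom L h, wOp u p * pdz φ p * ψ p| ≤
      W * ∫ p in dom L h, |pdz φ p * ψ p| := by
    calc |∫ p in dom L h, wOp u p * pdz φ p * ψ p|
        ≤ ∫ p in dom L h, |wOp u p * pdz φ p * ψ p| := by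
          simpa only [Real.norm_eq_abs] using
            MeasureTheory.norm_integral_le_integral_norm (μ := volume.restrict (dom L h))
              (f := fun p => wOp u p * pdz φ p * ψ p)
      _ ≤ ∫ p in dom L h, W * |pdz φ p * ψ p| := by
          refine setIntegral_mono_on ?_ ?_ (measurableSet_Ioo.prod measurableSet_Ioo) ?_
          · exact intOn _ (((hwc.mul hφz).mul hψ).abs)
          · exact (intOn _ ((hφz.mul hψ).abs)).const_mul W
          · intro p hp
            rw [mul_assoc, abs_mul]
            exact mul_le_mul_of_nonneg_right (hwW p hp) (abs_nonneg _)
      _ = W * ∫ p in dom L h, |pdz φ p * ψ p| := MeasureTheory.integral_const_mul W _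
  have main2 : (∫ p in dom L h, |pdz φ p * ψ p|) ≤ l2 L h (pdz φ) * l2 L h ψ := by
    rw [l2, l2]
    exact cs_aux ((volume : Measure (ℝ × ℝ)).restrict (dom L h)) (pdz φ) ψ
      hφz.aestronglyMeasurable hψ.aestronglyMeasurable
      (intOn _ (hφz.pow 2)) (intOn _ (hψ.pow 2))
  -- bound W
  have h1nn : 0 ≤ h1n L h u := Real.sqrt_nonneg _
  have h2nn : 0 ≤ h2n L h u := Real.sqrt_nonneg _
  have e1 : h1n L h u ^ 2 = l2 L h u ^ 2 + l2 L h (pdx u) ^ 2 + l2 L h (pdz u) ^ 2 :=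
    Real.sq_sqrt (by positivity)
  have e2 : l2 L h (pdx u) ^ 2 = A := Real.sq_sqrt hA0
  have e3 : h2n L h u ^ 2 = h1n L h u ^ 2 + l2 L h (pdx (pdx u)) ^ 2
      + l2 L h (pdx (pdz u)) ^ 2 + l2 L h (pdz (pdz u)) ^ 2 :=
    Real.sq_sqrt (by positivity)
  have e4 : l2 L h (pdx (pdx u)) ^ 2 = B := Real.sq_sqrt hB0
  have hl2A : A ≤ h1n L h u ^ 2 := by
    rw [e1]
    linarith [e2, sq_nonneg (l2 L h u), sq_nonneg (l2 L h (pdz u))]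
  have hl2B : B ≤ h2n L h u ^ 2 := by
    rw [e3]
    linarith [e4, sq_nonneg (h1n L h u), sq_nonneg (l2 L h (pdx (pdz u))),
      sq_nonneg (l2 L h (pdz (pdz u)))]
  have h12 : h1n L h u ≤ h2n L h u := by
    have hsq : h1n L h u ^ 2 ≤ h2n L h u ^ 2 := by
      rw [e3]
      linarith [sq_nonneg (l2 L h (pdx (pdx u))), sq_nonneg (l2 L h (pdx (pdz u))),
        sq_nonneg (l2 L h (pdz (pdz u)))]
    exact le_of_pow_le_pow_left₀ (by norm_num) h2nn hsq
  have hsA : Real.sqrt A ≤ h1n L h u := by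
    calc Real.sqrt A ≤ Real.sqrt (h1n L h u ^ 2) := Real.sqrt_le_sqrt hl2A
      _ = h1n L h u := Real.sqrt_sq h1nn
  have hsB : Real.sqrt B ≤ h2n L h u := by
    calc Real.sqrt B ≤ Real.sqrt (h2n L h u ^ 2) := Real.sqrt_le_sqrt hl2B
      _ = h2n L h u := Real.sqrt_sq h2nn
  have hSle : S ≤ (1 / L + 2) * (h1n L h u * h2n L h u) := by
    have hAle : A ≤ h1n L h u * h2n L h u := by
      calc A ≤ h1n L h u ^ 2 := hl2A
        _ = h1n L h u * h1n L h u := pow_two _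
        _ ≤ h1n L h u * h2n L h u := mul_le_mul_of_nonneg_left h12 h1nn
    have h1 : A / L ≤ h1n L h u * h2n L h u / L := by
      exact div_le_div_of_nonneg_right hAle hL.le
    have h2 : Real.sqrt A * Real.sqrt B ≤ h1n L h u * h2n L h u :=
      mul_le_mul hsA hsB (Real.sqrt_nonneg _) h1nn
    have e : (1 / L + 2) * (h1n L h u * h2n L h u)
        = h1n L h u * h2n L h u / L + 2 * (h1n L h u * h2n L h u) := by ring
    rw [hSdef, e]
    linarith
  have hWle : W ≤ Real.sqrt h * Real.sqrt (1 / L + 2) *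
      Real.sqrt (h1n L h u) * Real.sqrt (h2n L h u) := by
    have e : Real.sqrt ((1 / L + 2) * (h1n L h u * h2n L h u))
        = Real.sqrt (1 / L + 2) * (Real.sqrt (h1n L h u) * Real.sqrt (h2n L h u)) := by
      rw [Real.sqrt_mul (by positivity), Real.sqrt_mul h1nn]
    have hS2 : Real.sqrt S ≤ Real.sqrt (1 / L + 2) *
        (Real.sqrt (h1n L h u) * Real.sqrt (h2n L h u)) :=
      e ▸ Real.sqrt_le_sqrt hSle
    calc W = Real.sqrt h * Real.sqrt S := hWdef
      _ ≤ Real.sqrt h * (Real.sqrt (1 / L + 2) *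
          (Real.sqrt (h1n L h u) * Real.sqrt (h2n L h u))) :=
        mul_le_mul_of_nonneg_left hS2 (Real.sqrt_nonneg _)
      _ = Real.sqrt h * Real.sqrt (1 / L + 2) *
          Real.sqrt (h1n L h u) * Real.sqrt (h2n L h u) := by ring
  have l2nn : ∀ f : ℝ × ℝ → ℝ, 0 ≤ l2 L h f := fun f => Real.sqrt_nonneg _
  calc |∫ p in dom L h, wOp u p * pdz φ p * ψ p|
      ≤ W * ∫ p in dom L h, |pdz φ p * ψ p| := main1
    _ ≤ W * (l2 L h (pdz φ) * l2 L h ψ) := mul_le_mul_of_nonneg_left main2 hW0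
    _ ≤ (Real.sqrt h * Real.sqrt (1 / L + 2) * Real.sqrt (h1n L h u) *
        Real.sqrt (h2n L h u)) * (l2 L h (pdz φ) * l2 L h ψ) :=
        mul_le_mul_of_nonneg_right hWle (mul_nonneg (l2nn _) (l2nn _))
    _ = Real.sqrt h * Real.sqrt (1 / L + 2) * h1n L h u ^ ((1:ℝ)/2) *
        h2n L h u ^ ((1:ℝ)/2) * l2 L h (pdz φ) * l2 L h ψ := by
        rw [← Real.sqrt_eq_rpow, ← Real.sqrt_eq_rpow]; ring
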